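/- Let (X, 𝒜, μ, T) be an ergodic probability preserving system and (A_l) an asymptotically rare sequence. Define R_l : X → [0,∞]^ℕ₀ by R_l := μ(A_l)·Φ_{A_l}, where Φ_A = (φ_A, φ_A∘T_A, φ_A∘T_A², …). Then (R_l) is asymptotically T-invariant in μ-measure: the product-metric distance d(R_l∘T, R_l) converges to 0 in μ-measure as l → ∞, where the product metric on [0,∞]^ℕ₀ is d(q,r) = Σ_{j≥0} 2^{−(j+1)}|e^{−q^{(j)}} − e^{−r^{(j)}}|. -/

import Mathlib

open MeasureTheory Filter Topology Set

/-- First hitting time of `A` under `T`. -/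
noncomputable def hit {X : Type*} (T : X → X) (A : Set X) (x : X) : ℕ :=
  sInf {n : ℕ | 1 ≤ n ∧ T^[n] x ∈ A}

/-- The first entrance map `T_A x := T^{φ_A(x)} x`. -/
noncomputable def ret {X : Type*} (T : X → X) (A : Set X) (x : X) : X :=
  T^[hit T A x] x

/-- The `j`-th entry `φ_A(T_A^j x)` of the hitting-time process `Φ_A`. -/
noncomputable def hitOrbit {X : Type*} (T : X → X) (A : Set X) (x : X) (j : ℕ) : ℕ :=
  hit T A ((ret T A)^[j] x)

/-- For an asymptotically rare sequence `(A_l)` in an ergodic probability preserving system,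
the normalized hitting-time processes `R_l = μ(A_l)·Φ_{A_l}` are asymptotically `T`-invariant
in `μ`-measure, in the product metric
`d(q,r) = Σ_j 2^{-(j+1)} |e^{-q⁽ʲ⁾} - e^{-r⁽ʲ⁾}|` on `[0,∞]^{ℕ₀}`. -/
lemma key_shift {X : Type*} (T : X → X) (A : Set X) (x : X) (hx : T x ∉ A) :
    (∀ j, hitOrbit T A (T x) j = hitOrbit T A x j) ∨
    (hitOrbit T A (T x) 0 + 1 = hitOrbit T A x 0 ∧
      ∀ j, 1 ≤ j → hitOrbit T A (T x) j = hitOrbit T A x j) := by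
  by_cases hS : {n : ℕ | 1 ≤ n ∧ T^[n] x ∈ A}.Nonempty
  · right
    have hm := Nat.sInf_mem hS
    set m := sInf {n : ℕ | 1 ≤ n ∧ T^[n] x ∈ A} with hmdef
    have hhit : hit T A x = m := rfl
    obtain ⟨hm1, hm2⟩ := hm
    have hmne1 : m ≠ 1 := by
      intro h
      apply hx
      have := hm2
      rw [h] at this
      simpa using this
    have hm2' : 2 ≤ m := by omega
    have hmem : m - 1 ∈ {n : ℕ | 1 ≤ n ∧ T^[n] (T x) ∈ A} := by
      refine ⟨by omega, ?_⟩
      have heq : T^[m - 1] (T x) = T^[m] x := by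
        rw [← Function.iterate_succ_apply]
        congr 1
        omega
      rw [heq]; exact hm2
    have hle : hit T A (T x) ≤ m - 1 := Nat.sInf_le hmem
    have hne : {n : ℕ | 1 ≤ n ∧ T^[n] (T x) ∈ A}.Nonempty := ⟨m - 1, hmem⟩
    have hmem2 := Nat.sInf_mem hne
    have hge : m - 1 ≤ hit T A (T x) := by
      have hk1 : hit T A (T x) + 1 ∈ {n : ℕ | 1 ≤ n ∧ T^[n] x ∈ A} := by
        refine ⟨by omega, ?_⟩
        rw [Function.iterate_succ_apply]
        exact hmem2.2
      have := Nat.sInf_le hk1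
      omega
    have hkey : hit T A (T x) = m - 1 := le_antisymm hle hge
    have hret : ret T A (T x) = ret T A x := by
      unfold ret
      rw [hkey, hhit, ← Function.iterate_succ_apply]
      congr 1
      omega
    constructor
    · show hit T A ((ret T A)^[0] (T x)) + 1 = hit T A ((ret T A)^[0] x)
      simp only [Function.iterate_zero, id_eq]
      rw [hkey, hhit]; omega
    · intro j hj
      obtain ⟨i, rfl⟩ : ∃ i, j = i + 1 := ⟨j - 1, by omega⟩
      unfold hitOrbit
      rw [Function.iterate_succ_apply, Function.iterate_succ_apply, hret]
  · left
    have hempty : {n : ℕ | 1 ≤ n ∧ T^[n] x ∈ A} = ∅ :=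
      Set.not_nonempty_iff_eq_empty.mp hS
    have h0 : hit T A x = 0 := by unfold hit; rw [hempty]; exact Nat.sInf_empty
    have hS' : {n : ℕ | 1 ≤ n ∧ T^[n] (T x) ∈ A} = ∅ := by
      ext n
      simp only [Set.mem_setOf_eq, Set.mem_empty_iff_false, iff_false, not_and]
      intro hn hmem
      have : n + 1 ∈ {n : ℕ | 1 ≤ n ∧ T^[n] x ∈ A} :=
        ⟨by omega, by rw [Function.iterate_succ_apply]; exact hmem⟩
      rw [hempty] at this
      exact this
    have h0' : hit T A (T x) = 0 := by unfold hit; rw [hS']; exact Nat.sInf_empty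
    have hfx : ret T A x = x := by unfold ret; rw [h0]; rfl
    have hfx' : ret T A (T x) = T x := by unfold ret; rw [h0']; rfl
    intro j
    unfold hitOrbit
    rw [Function.iterate_fixed hfx', Function.iterate_fixed hfx, h0, h0']

lemma exp_diff_le {a : ℝ} (ha : 0 ≤ a) (n : ℕ) :
    |Real.exp (-(a * (n : ℝ))) - Real.exp (-(a * ((n : ℝ) + 1)))| ≤ a := by
  have h1e : Real.exp (-(a * ((n : ℝ) + 1))) ≤ Real.exp (-(a * (n : ℝ))) := by
    apply Real.exp_le_exp.mpr
    nlinarith [Nat.cast_nonneg (α := ℝ) n]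
  rw [abs_of_nonneg (by linarith)]
  have hsplit : Real.exp (-(a * ((n : ℝ) + 1))) =
      Real.exp (-(a * (n : ℝ))) * Real.exp (-a) := by
    rw [← Real.exp_add]; ring_nf
  rw [hsplit]
  have e1 : Real.exp (-(a * (n : ℝ))) ≤ 1 := by
    apply Real.exp_le_one_iff.mpr
    have : 0 ≤ a * (n : ℝ) := by positivity
    linarith
  have e2 : 1 - a ≤ Real.exp (-a) := by
    have := Real.add_one_le_exp (-a)
    linarith
  have e3 : Real.exp (-a) ≤ 1 := by
    apply Real.exp_le_one_iff.mpr; linarith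
  have e4 : 0 < Real.exp (-(a * (n : ℝ))) := Real.exp_pos _
  nlinarith

lemma tsum_bound {X : Type*} (T : X → X) (A : Set X) {a : ℝ} (ha : 0 ≤ a)
    (x : X) (hx : T x ∉ A) :
    ∑' j : ℕ, (2 : ℝ)⁻¹ ^ (j + 1) *
      |Real.exp (-(a * (hitOrbit T A (T x) j : ℝ)))
        - Real.exp (-(a * (hitOrbit T A x j : ℝ)))| ≤ a := by
  rcases key_shift T A x hx with h | ⟨h0, h1⟩
  · simp only [h, sub_self, abs_zero, mul_zero, tsum_zero]
    exact ha
  · rw [tsum_eq_single 0 (fun j hj => by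
      rw [h1 j (by omega)]; simp)]
    have hx0 : (hitOrbit T A x 0 : ℝ) = (hitOrbit T A (T x) 0 : ℝ) + 1 := by
      rw [← h0]; push_cast; ring
    rw [hx0]
    have hb := exp_diff_le ha (hitOrbit T A (T x) 0)
    calc (2 : ℝ)⁻¹ ^ (0 + 1) *
          |Real.exp (-(a * (hitOrbit T A (T x) 0 : ℝ)))
            - Real.exp (-(a * ((hitOrbit T A (T x) 0 : ℝ) + 1)))|
        ≤ (2 : ℝ)⁻¹ ^ (0 + 1) * a := by
          apply mul_le_mul_of_nonneg_left hb (by norm_num)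
      _ ≤ a := by norm_num; linarith

theorem stmt18 {X : Type*} [MeasurableSpace X] (μ : Measure X) [IsProbabilityMeasure μ]
    (T : X → X) (hT : Ergodic T μ)
    (A : ℕ → Set X) (hA : ∀ l, MeasurableSet (A l)) (hpos : ∀ l, 0 < μ (A l))
    (hrare : Tendsto (fun l => μ (A l)) atTop (𝓝 0)) :
    ∀ ε > (0 : ℝ), Tendsto (fun l => μ {x |
        ε ≤ ∑' j : ℕ, (2 : ℝ)⁻¹ ^ (j + 1) *
          |Real.exp (-((μ (A l)).toReal * (hitOrbit T (A l) (T x) j : ℝ)))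
            - Real.exp (-((μ (A l)).toReal * (hitOrbit T (A l) x j : ℝ)))|})
      atTop (𝓝 0) := by
  intro ε hε
  have hTp : MeasurePreserving T μ μ := hT.toMeasurePreserving
  have htt : Tendsto (fun l => (μ (A l)).toReal) atTop (𝓝 0) := by
    have := (ENNReal.tendsto_toReal (a := 0) (by simp)).comp hrare
    simpa [Function.comp_def] using this
  have hev : ∀ᶠ l in atTop, (μ (A l)).toReal < ε := htt.eventually_lt_const hε
  refine tendsto_of_tendsto_of_tendsto_of_le_of_le' tendsto_const_nhds hrare
    (Eventually.of_forall fun l => zero_le) ?_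
  filter_upwards [hev] with l hl
  have hsub : {x : X |
      ε ≤ ∑' j : ℕ, (2 : ℝ)⁻¹ ^ (j + 1) *
        |Real.exp (-((μ (A l)).toReal * (hitOrbit T (A l) (T x) j : ℝ)))
          - Real.exp (-((μ (A l)).toReal * (hitOrbit T (A l) x j : ℝ)))|}
      ⊆ T ⁻¹' (A l) := by
    intro x hx
    by_contra hTx
    have hbound := tsum_bound T (A l) (a := (μ (A l)).toReal) ENNReal.toReal_nonneg x hTx
    have : ε ≤ (μ (A l)).toReal := le_trans hx hbound
    linarith
  calc μ _ ≤ μ (T ⁻¹' (A l)) := measure_mono hsub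
    _ = μ (A l) := hTp.measure_preimage (hA l).nullMeasurableSet
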